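/- Let λ > 0, let c: [0,∞) → ℝ be s-periodic and bounded with |c| ≤ M, taking constant values ℓ₁, ℓ₂, ℓ₃ on consecutive subintervals of lengths μ₁s, μ₂s, μ₃s where μ₁+μ₂+μ₃ = 1, μᵢ ≥ 0. Then |∫₀^∞ e^{−λt} c(t) dt − (μ₁ℓ₁ + μ₂ℓ₂ + μ₃ℓ₃)/λ| ≤ C·s for a constant C depending only on M and λ. -/

import Mathlib

set_option maxHeartbeats 1000000

open MeasureTheory Set

theorem stmt_10 (lam M : ℝ) (hlam : 0 < lam) (hM : 0 ≤ M) :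
    ∃ C : ℝ, 0 ≤ C ∧ ∀ (s : ℝ), 0 < s → ∀ (c : ℝ → ℝ) (ℓ₁ ℓ₂ ℓ₃ μ₁ μ₂ μ₃ : ℝ),
      Measurable c →
      (∀ t, |c t| ≤ M) →
      (∀ t, c (t + s) = c t) →
      0 ≤ μ₁ → 0 ≤ μ₂ → 0 ≤ μ₃ → μ₁ + μ₂ + μ₃ = 1 →
      (∀ t ∈ Set.Ico (0:ℝ) (μ₁ * s), c t = ℓ₁) →
      (∀ t ∈ Set.Ico (μ₁ * s) ((μ₁ + μ₂) * s), c t = ℓ₂) →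
      (∀ t ∈ Set.Ico ((μ₁ + μ₂) * s) s, c t = ℓ₃) →
      |(∫ t in Set.Ioi (0:ℝ), Real.exp (-lam * t) * c t)
        - (μ₁ * ℓ₁ + μ₂ * ℓ₂ + μ₃ * ℓ₃) / lam| ≤ C * s := by
  refine ⟨6 * M, by positivity, ?_⟩
  intro s hs c ℓ₁ ℓ₂ ℓ₃ μ₁ μ₂ μ₃ hc hbd hper h1 h2 h3 hsum hI1 hI2 hI3
  set cbar := μ₁ * ℓ₁ + μ₂ * ℓ₂ + μ₃ * ℓ₃ with hcbar
  -- measurability of integrand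
  have hfm : Measurable (fun t => Real.exp (-lam * t) * c t) :=
    (Real.measurable_exp.comp (measurable_const.mul measurable_id)).mul hc
  have hbM : ∀ t, ‖Real.exp (-lam * t) * c t‖ ≤ M * Real.exp (-lam * t) := by
    intro t
    rw [Real.norm_eq_abs, abs_mul, abs_of_pos (Real.exp_pos _)]
    calc Real.exp (-lam * t) * |c t| ≤ Real.exp (-lam * t) * M :=
          mul_le_mul_of_nonneg_left (hbd t) (Real.exp_pos _).le
      _ = M * Real.exp (-lam * t) := mul_comm _ _
  have hgint : IntegrableOn (fun t => M * Real.exp (-lam * t)) (Ioi 0) :=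
    (exp_neg_integrableOn_Ioi 0 hlam).const_mul M
  have hfi : IntegrableOn (fun t => Real.exp (-lam * t) * c t) (Ioi 0) :=
    hgint.mono' hfm.aestronglyMeasurable (Filter.Eventually.of_forall hbM)
  have hintexp : ∫ t in Ioi (0:ℝ), Real.exp (-lam * t) = lam⁻¹ := by
    have h := integral_comp_mul_left_Ioi (fun y => Real.exp (-y)) 0 hlam
    simp only [mul_zero, integral_exp_neg_Ioi, neg_zero, Real.exp_zero, smul_eq_mul,
      mul_one] at h
    simpa [neg_mul] using h
  -- crude bound on the integral
  have hTb : |∫ t in Ioi (0:ℝ), Real.exp (-lam * t) * c t| ≤ M / lam := by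
    calc |∫ t in Ioi (0:ℝ), Real.exp (-lam * t) * c t|
        ≤ ∫ t in Ioi (0:ℝ), M * Real.exp (-lam * t) := by
          rw [← Real.norm_eq_abs]
          exact norm_integral_le_of_norm_le hgint (Filter.Eventually.of_forall hbM)
      _ = M * lam⁻¹ := by rw [integral_const_mul, hintexp]
      _ = M / lam := by rw [div_eq_mul_inv]
  -- |cbar| ≤ M
  have hcb : |cbar| ≤ M := by
    have k : ∀ (μ ℓ : ℝ), 0 ≤ μ → (0 < μ → |ℓ| ≤ M) → |μ * ℓ| ≤ μ * M := by
      intro μ ℓ hμ h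
      rcases eq_or_lt_of_le hμ with h0 | h0
      · simp [← h0]
      · rw [abs_mul, abs_of_pos h0]
        exact mul_le_mul_of_nonneg_left (h h0) hμ
    have k1 : |μ₁ * ℓ₁| ≤ μ₁ * M := k _ _ h1 (fun h0 => by
      rw [← hI1 0 ⟨le_refl 0, by positivity⟩]; exact hbd 0)
    have k2 : |μ₂ * ℓ₂| ≤ μ₂ * M := k _ _ h2 (fun h0 => by
      rw [← hI2 (μ₁ * s) ⟨le_refl _, by nlinarith⟩]; exact hbd _)
    have k3 : |μ₃ * ℓ₃| ≤ μ₃ * M := k _ _ h3 (fun h0 => by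
      rw [← hI3 ((μ₁ + μ₂) * s) ⟨le_refl _, by nlinarith⟩]; exact hbd _)
    calc |cbar| ≤ |μ₁ * ℓ₁| + |μ₂ * ℓ₂| + |μ₃ * ℓ₃| := abs_add_three _ _ _
      _ ≤ μ₁ * M + μ₂ * M + μ₃ * M := by linarith
      _ = M := by nlinarith [hsum]
  rcases le_total 1 (lam * s) with hx | hx
  · -- large period: crude bound
    have hcbl : |cbar / lam| ≤ M / lam := by
      rw [abs_div, abs_of_pos hlam]
      gcongr
    have hMl : M / lam ≤ M * s := by
      rw [div_le_iff₀ hlam]; nlinarith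
    calc |(∫ t in Set.Ioi (0:ℝ), Real.exp (-lam * t) * c t) - cbar / lam|
        ≤ |∫ t in Set.Ioi (0:ℝ), Real.exp (-lam * t) * c t| + |cbar / lam| := abs_sub _ _
      _ ≤ M / lam + M / lam := add_le_add hTb hcbl
      _ ≤ 6 * M * s := by nlinarith [mul_nonneg hM hs.le]
  · -- small period: main estimate
    set q := Real.exp (-(lam * s)) with hq
    have hq0 : 0 < q := Real.exp_pos _
    have hq1 : q < 1 := by
      rw [hq, ← Real.exp_zero]
      exact Real.exp_lt_exp.mpr (by nlinarith)
    set r := 1 - q with hr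
    have hr0 : 0 < r := by simp only [hr]; linarith
    -- decomposition of Ioi 0 into periods
    have hun : Ioi (0:ℝ) = ⋃ n : ℕ, Ioc ((n:ℝ) * s) (((n:ℝ) + 1) * s) := by
      ext t
      simp only [mem_Ioi, mem_iUnion, mem_Ioc]
      constructor
      · intro ht
        have hts : 0 < t / s := div_pos ht hs
        have hceil : 1 ≤ ⌈t / s⌉₊ := Nat.one_le_iff_ne_zero.mpr (by
          simpa using (Nat.ceil_pos.mpr hts).ne')
        refine ⟨⌈t / s⌉₊ - 1, ?_, ?_⟩
        · have hlt : (⌈t / s⌉₊ : ℝ) < t / s + 1 := Nat.ceil_lt_add_one hts.le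
          have : ((⌈t / s⌉₊ - 1 : ℕ) : ℝ) = (⌈t / s⌉₊ : ℝ) - 1 := by
            push_cast [Nat.cast_sub hceil]; ring
          rw [this]
          have h2 : (⌈t / s⌉₊ : ℝ) - 1 < t / s := by linarith
          calc ((⌈t / s⌉₊ : ℝ) - 1) * s < t / s * s := by nlinarith
            _ = t := div_mul_cancel₀ t hs.ne'
        · have hle : t / s ≤ (⌈t / s⌉₊ : ℝ) := Nat.le_ceil _
          have : ((⌈t / s⌉₊ - 1 : ℕ) : ℝ) + 1 = (⌈t / s⌉₊ : ℝ) := by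
            push_cast [Nat.cast_sub hceil]; ring
          rw [this, ← div_le_iff₀ hs]
          exact hle
      · rintro ⟨n, hn1, hn2⟩
        have : (0:ℝ) ≤ (n:ℝ) * s := by positivity
        linarith
    have hdisj : Pairwise (Function.onFun Disjoint
        fun n : ℕ => Ioc ((n:ℝ) * s) (((n:ℝ) + 1) * s)) := by
      intro m n hmn
      rw [Function.onFun, Set.Ioc_disjoint_Ioc]
      rcases hmn.lt_or_gt with h | h
      · have : ((m:ℝ) + 1) * s ≤ (n:ℝ) * s := by
          have : ((m:ℝ) + 1) ≤ (n:ℝ) := by exact_mod_cast h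
          nlinarith
        exact (min_le_left _ _).trans (this.trans (le_max_right _ _))
      · have : ((n:ℝ) + 1) * s ≤ (m:ℝ) * s := by
          have : ((n:ℝ) + 1) ≤ (m:ℝ) := by exact_mod_cast h
          nlinarith
        exact (min_le_right _ _).trans (this.trans (le_max_left _ _))
    have hsum_eq : (∫ t in Ioi (0:ℝ), Real.exp (-lam * t) * c t)
        = ∑' n : ℕ, ∫ t in Ioc ((n:ℝ) * s) (((n:ℝ) + 1) * s),
            Real.exp (-lam * t) * c t := by
      rw [hun] at hfi ⊢
      exact integral_iUnion (fun n => measurableSet_Ioc) hdisj hfi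
    -- each period integral
    set I := ∫ u in (0:ℝ)..s, Real.exp (-lam * u) * c u with hIdef
    have hterm : ∀ n : ℕ, (∫ t in Ioc ((n:ℝ) * s) (((n:ℝ) + 1) * s),
        Real.exp (-lam * t) * c t) = q ^ n * I := by
      intro n
      have hle : (n:ℝ) * s ≤ ((n:ℝ) + 1) * s := by nlinarith
      rw [← intervalIntegral.integral_of_le hle]
      have htr := intervalIntegral.integral_comp_add_right (a := 0) (b := s)
        (fun t => Real.exp (-lam * t) * c t) ((n:ℝ) * s)
      rw [show (0:ℝ) + (n:ℝ) * s = (n:ℝ) * s by ring,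
        show s + (n:ℝ) * s = ((n:ℝ) + 1) * s by ring] at htr
      rw [← htr]
      have hfx : ∀ u : ℝ, Real.exp (-lam * (u + (n:ℝ) * s)) * c (u + (n:ℝ) * s)
          = q ^ n * (Real.exp (-lam * u) * c u) := by
        intro u
        have hp : Function.Periodic c s := hper
        have hcp : c (u + (n:ℝ) * s) = c u := hp.nat_mul n u
        rw [hcp, show -lam * (u + (n:ℝ) * s) = (-lam * u) + (n:ℝ) * (-(lam * s)) by ring,
          Real.exp_add, Real.exp_nat_mul]
        rw [hq]; ring
      simp only [hfx]
      rw [intervalIntegral.integral_const_mul]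
    have hTeq : (∫ t in Ioi (0:ℝ), Real.exp (-lam * t) * c t) = r⁻¹ * I := by
      rw [hsum_eq, tsum_congr hterm, tsum_mul_right,
        tsum_geometric_of_lt_one hq0.le hq1, hr]
    -- interval integrability of c
    have hci : ∀ p p' : ℝ, IntervalIntegrable c volume p p' := by
      intro p p'
      rw [intervalIntegrable_iff]
      refine Integrable.mono' (g := fun _ => M) ?_ hc.aestronglyMeasurable
        (Filter.Eventually.of_forall fun t => by rw [Real.norm_eq_abs]; exact hbd t)
      exact integrableOn_const measure_Ioc_lt_top.ne
    -- the single-period mean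
    have hpiece : ∀ (p p' ℓ : ℝ), p ≤ p' → (∀ t ∈ Set.Ico p p', c t = ℓ) →
        ∫ u in p..p', c u = (p' - p) * ℓ := by
      intro p p' ℓ hpq hval
      rw [intervalIntegral.integral_of_le hpq, MeasureTheory.integral_Ioc_eq_integral_Ioo,
        MeasureTheory.setIntegral_congr_fun measurableSet_Ioo
          (fun t ht => hval t ⟨ht.1.le, ht.2⟩),
        MeasureTheory.setIntegral_const, Real.volume_real_Ioo_of_le hpq, smul_eq_mul]
    have ha0 : (0:ℝ) ≤ μ₁ * s := by positivity
    have hab : μ₁ * s ≤ (μ₁ + μ₂) * s := by nlinarith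
    have hbs : (μ₁ + μ₂) * s ≤ s := by nlinarith
    have hJ : (∫ u in (0:ℝ)..s, c u) = s * cbar := by
      have e2 := intervalIntegral.integral_add_adjacent_intervals
        (hci 0 ((μ₁ + μ₂) * s)) (hci ((μ₁ + μ₂) * s) s)
      have e1 := intervalIntegral.integral_add_adjacent_intervals
        (hci 0 (μ₁ * s)) (hci (μ₁ * s) ((μ₁ + μ₂) * s))
      rw [← e2, ← e1, hpiece _ _ _ ha0 hI1, hpiece _ _ _ hab hI2, hpiece _ _ _ hbs hI3,
        hcbar]
      linear_combination (-(s * ℓ₃)) * hsum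
    -- estimate on I - s * cbar
    have hfci : IntervalIntegrable (fun u => Real.exp (-lam * u) * c u) volume 0 s := by
      rw [intervalIntegrable_iff_integrableOn_Ioc_of_le hs.le]
      exact hfi.mono_set Set.Ioc_subset_Ioi_self
    have hIJ : I - s * cbar = ∫ u in (0:ℝ)..s, (Real.exp (-lam * u) - 1) * c u := by
      rw [← hJ, hIdef, ← intervalIntegral.integral_sub hfci (hci 0 s)]
      apply intervalIntegral.integral_congr
      intro u _
      ring
    have hE : |I - s * cbar| ≤ lam * s * M * s := by
      rw [hIJ, ← Real.norm_eq_abs]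
      have hb : ∀ u ∈ Set.uIoc (0:ℝ) s, ‖(Real.exp (-lam * u) - 1) * c u‖ ≤ lam * s * M := by
        intro u hu
        rw [Set.uIoc_of_le hs.le] at hu
        have hu1 : 0 < u := hu.1
        have hu2 : u ≤ s := hu.2
        have he1 : Real.exp (-lam * u) ≤ 1 := by
          rw [← Real.exp_zero]; exact Real.exp_le_exp.mpr (by nlinarith)
        have he2 : 1 - Real.exp (-lam * u) ≤ lam * u := by
          have := Real.add_one_le_exp (-(lam * u))
          rw [neg_mul]; linarith
        rw [Real.norm_eq_abs, abs_mul, abs_of_nonpos (by linarith), neg_sub]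
        have hcu := hbd u
        have h0 : 0 ≤ 1 - Real.exp (-lam * u) := by linarith
        calc (1 - Real.exp (-lam * u)) * |c u| ≤ (lam * u) * M := by
              apply mul_le_mul he2 hcu (abs_nonneg _) (by positivity)
          _ ≤ lam * s * M :=
              mul_le_mul_of_nonneg_right (mul_le_mul_of_nonneg_left hu2 hlam.le) hM
      calc ‖∫ u in (0:ℝ)..s, (Real.exp (-lam * u) - 1) * c u‖
          ≤ lam * s * M * |s - 0| := intervalIntegral.norm_integral_le_of_norm_le_const hb
        _ = lam * s * M * s := by rw [sub_zero, abs_of_pos hs]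
    -- elementary exp inequalities
    have hxplus : lam * s + 1 ≤ Real.exp (lam * s) := Real.add_one_le_exp _
    have hqexp : q * Real.exp (lam * s) = 1 := by
      rw [hq, ← Real.exp_add]; norm_num
    have hq3 : (1:ℝ) / 3 ≤ q := by
      have h2 : Real.exp (-1) ≤ q := by
        rw [hq]; exact Real.exp_le_exp.mpr (by linarith)
      have h3 : Real.exp 1 < 3 := lt_trans Real.exp_one_lt_d9 (by norm_num)
      have h4 : Real.exp (-1) * Real.exp 1 = 1 := by rw [← Real.exp_add]; norm_num
      nlinarith [Real.exp_pos 1, Real.exp_pos (-1)]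
    have hxq : lam * s * q ≤ r := by nlinarith
    have hr3 : lam * s / 3 ≤ r := by nlinarith [mul_pos hlam hs]
    have hxr0 : 0 ≤ lam * s - r := by
      have := Real.add_one_le_exp (-(lam * s))
      simp only [hr, hq]
      linarith
    have hxr : lam * s - r ≤ (lam * s) ^ 2 := by
      -- q ≤ 1 - x + x^2 from q * (1 + x) ≤ 1 and (1 - x + x^2)(1 + x) = 1 + x^3
      have hqx : q * (lam * s + 1) ≤ 1 := by nlinarith
      have hx0 : 0 < lam * s := mul_pos hlam hs
      nlinarith
    -- assembly
    rw [hTeq]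
    have key : r⁻¹ * I - cbar / lam
        = r⁻¹ * (I - s * cbar) + (r⁻¹ * s - lam⁻¹) * cbar := by
      rw [div_eq_mul_inv]; ring
    have hrinv : r⁻¹ ≤ 3 / (lam * s) := by
      have := inv_anti₀ (by positivity : (0:ℝ) < lam * s / 3) hr3
      rwa [inv_div] at this
    have bound1 : |r⁻¹ * (I - s * cbar)| ≤ 3 * M * s := by
      rw [abs_mul, abs_of_pos (inv_pos.mpr hr0)]
      calc r⁻¹ * |I - s * cbar| ≤ (3 / (lam * s)) * (lam * s * M * s) := by
            apply mul_le_mul hrinv hE (abs_nonneg _) (by positivity)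
        _ = 3 * M * s := by field_simp
    have hdiff : r⁻¹ * s - lam⁻¹ = (lam * s - r) / (lam * r) := by
      field_simp
    have bound2 : |(r⁻¹ * s - lam⁻¹) * cbar| ≤ 3 * s * M := by
      rw [abs_mul, hdiff]
      have hnum : (lam * s - r) / (lam * r) ≤ 3 * s := by
        rw [div_le_iff₀ (by positivity)]
        nlinarith [hxr, hr3, mul_pos hlam hs]
      have hnn : 0 ≤ (lam * s - r) / (lam * r) := div_nonneg hxr0 (by positivity)
      rw [abs_of_nonneg hnn]
      exact mul_le_mul hnum hcb (abs_nonneg _) (by positivity)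
    calc |r⁻¹ * I - cbar / lam|
        ≤ |r⁻¹ * (I - s * cbar)| + |(r⁻¹ * s - lam⁻¹) * cbar| := by
          rw [key]; exact abs_add_le _ _
      _ ≤ 3 * M * s + 3 * s * M := add_le_add bound1 bound2
      _ = 6 * M * s := by ring
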